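/- Let κ > 2 be a cardinal and A a group with more than one element. Suppose that every surjective homomorphism from a direct product of fewer than κ groups onto A factors through one of the canonical projections. Then for any surjective homomorphism f : ∏_{i∈I} B_i → A (I arbitrary), the ultrafilter U = {J ⊆ I : f factors through π_J} is κ-complete, and f factors through the canonical homomorphism onto the ultraproduct ∏_U B_i. -/

import Mathlib

variable {I : Type*} (F : Filter I) (B : I → Type*) [∀ i, Group (B i)]

/-- The kernel of the canonical map onto the reduced (filtered/ultra) product:
elements of the direct product equal to `1` on a set belonging to `F`. -/
def filterKer : Subgroup (∀ i, B i) where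
  carrier := {b | {i | b i = 1} ∈ F}
  one_mem' := by simp
  mul_mem' := by
    intro a b ha hb
    filter_upwards [ha, hb] with i hia hib
    simp [Set.mem_setOf_eq] at *
    simp [hia, hib]
  inv_mem' := by
    intro a ha
    filter_upwards [ha] with i hia
    simp_all

instance filterKer.normal : (filterKer F B).Normal := by
  constructor
  intro n hn g
  have hn' : {i | n i = 1} ∈ F := hn
  filter_upwards [hn'] with i hi
  show g i * n i * (g i)⁻¹ = 1
  simp [hi]

/-- A filter `F` is `κ`-complete if the intersection of any nonempty family of
fewer than `κ` members of `F` belongs to `F`. -/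
def FilterKComplete {J : Type u} (F : Filter J) (κ : Cardinal.{u}) : Prop :=
  ∀ T : Set (Set J), T.Nonempty → (∀ s ∈ T, s ∈ F) → Cardinal.mk T < κ → ⋂₀ T ∈ F

/-- The canonical projection of a direct product of groups onto the
subproduct indexed by `J ⊆ I`. -/
def projHom {I : Type u} (B : I → Type u) [∀ i, Group (B i)] (J : Set I) :
    (∀ i, B i) →* ∀ j : J, B j :=
  Pi.monoidHom fun j => Pi.evalMonoidHom B j


section BNaux

open Classical in
/-- Extend a family on `J` by `1` off `J`. -/
noncomputable def BNext {I : Type u} (B : I → Type u) [∀ i, Group (B i)] (J : Set I) :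
    (∀ j : J, B j) →* (∀ i, B i) where
  toFun c i := if h : i ∈ J then c ⟨i, h⟩ else 1
  map_one' := by funext i; by_cases h : i ∈ J <;> simp [h]
  map_mul' c d := by funext i; by_cases h : i ∈ J <;> simp [h]

/-- Regroup a direct product according to the fibers of `p`. -/
def BNglue {I : Type u} (B : I → Type u) [∀ i, Group (B i)] {T : Type u} (p : I → T) :
    (∀ t, ∀ i : {i : I // p i = t}, B i) →* (∀ i, B i) where
  toFun c i := c (p i) ⟨i, rfl⟩
  map_one' := rfl
  map_mul' _ _ := rfl

end BNaux

/-- Bergman–Nahlus, direction (i) ⇒ (ii): if every surjective homomorphism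
from a direct product of fewer than `κ` groups onto the nontrivial group `A`
factors through one of the canonical projections, then any surjective
homomorphism `f : ∏ᵢ Bᵢ →* A` factors through the quotient onto the
ultraproduct by the (κ-complete) ultrafilter of the subsets `J ⊆ I` through
whose subproducts `f` factors. -/
theorem stmt13 (κ : Cardinal.{u}) (hκ : 2 < κ)
    {A : Type u} [Group A] [Nontrivial A]
    (hfac : ∀ (J : Type u) (C : J → Type u) [∀ j, Group (C j)],
      Cardinal.mk J < κ → ∀ g : (∀ j, C j) →* A, Function.Surjective g →
        ∃ j₀ : J, ∃ h : C j₀ →* A, g = h.comp (Pi.evalMonoidHom C j₀))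
    {I : Type u} (B : I → Type u) [∀ i, Group (B i)]
    (f : (∀ i, B i) →* A) (hf : Function.Surjective f) :
    ∃ U : Ultrafilter I,
      (∀ J : Set I, J ∈ U ↔ ∃ g : (∀ j : J, B j) →* A, f = g.comp (projHom B J)) ∧
      FilterKComplete (U : Filter I) κ ∧
      ∃ h : ((∀ i, B i) ⧸ filterKer (↑U : Filter I) B) →* A,
        f = h.comp (QuotientGroup.mk' (filterKer (↑U : Filter I) B)) := by
  classical
  -- the collection of "supports" of f
  set 𝒰 : Set (Set I) := {J | ∀ b : ∀ i, B i, (∀ i ∈ J, b i = 1) → f b = 1} with h𝒰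
  have hU_univ : Set.univ ∈ 𝒰 := by
    intro b hb
    have : b = 1 := funext fun i => hb i (Set.mem_univ i)
    rw [this, map_one]
  have hU_mono : ∀ {J K : Set I}, J ⊆ K → J ∈ 𝒰 → K ∈ 𝒰 := by
    intro J K hJK hJ b hb
    exact hJ b fun i hi => hb i (hJK hi)
  have hU_inter : ∀ {J K : Set I}, J ∈ 𝒰 → K ∈ 𝒰 → J ∩ K ∈ 𝒰 := by
    intro J K hJ hK b hb
    have hsplit : b = (fun i => if i ∈ J then 1 else b i) *
        (fun i => if i ∈ J then b i else 1) := by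
      funext i; by_cases h : i ∈ J <;> simp [h]
    have h1 : f (fun i => if i ∈ J then 1 else b i) = 1 :=
      hJ _ fun i hi => by simp [hi]
    have h2 : f (fun i => if i ∈ J then b i else 1) = 1 := by
      refine hK _ fun i hi => ?_
      by_cases h : i ∈ J
      · simp [h, hb i ⟨h, hi⟩]
      · simp [h]
    rw [hsplit, map_mul, h1, h2, one_mul]
  have hU_empty : (∅ : Set I) ∉ 𝒰 := by
    intro h
    obtain ⟨a, ha⟩ := exists_ne (1 : A)
    obtain ⟨b, hb⟩ := hf a
    exact ha (hb ▸ h b (fun i hi => absurd hi (Set.notMem_empty i)))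
  -- the fiber lemma: for any partition of I into < κ pieces, some fiber is in 𝒰
  have fiber : ∀ (T : Type u) (p : I → T), Cardinal.mk T < κ →
      ∃ t₀ : T, {i | p i = t₀} ∈ 𝒰 := by
    intro T p hT
    have hsurj : Function.Surjective (f.comp (BNglue B p)) := by
      intro a
      obtain ⟨b, hb⟩ := hf a
      exact ⟨fun t i => b i, by simpa [BNglue] using hb⟩
    obtain ⟨t₀, h, hfe⟩ := hfac T (fun t => ∀ i : {i : I // p i = t}, B i) hT
      (f.comp (BNglue B p)) hsurj
    refine ⟨t₀, fun b hb => ?_⟩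
    have h1 : f b = (f.comp (BNglue B p)) (fun t i => b i) := rfl
    rw [h1, hfe]
    have h2 : (fun i : {i : I // p i = t₀} => b i) = 1 :=
      funext fun i => hb i i.2
    simp only [MonoidHom.comp_apply, Pi.evalMonoidHom_apply]
    rw [h2, map_one]
  -- dichotomy
  have hdich : ∀ J : Set I, J ∈ 𝒰 ∨ Jᶜ ∈ 𝒰 := by
    intro J
    obtain ⟨t₀, ht⟩ := fiber (ULift Bool)
      (fun i => if i ∈ J then ULift.up true else ULift.up false)
      (by
        have : Cardinal.mk (ULift.{u} Bool) = 2 := by simp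
        rw [this]; exact hκ)
    obtain ⟨b⟩ := t₀
    cases b
    · right
      refine hU_mono (fun i hi => ?_) ht
      simp only [Set.mem_setOf_eq] at hi
      intro hmem
      simp [hmem] at hi
    · left
      refine hU_mono (fun i hi => ?_) ht
      simp only [Set.mem_setOf_eq] at hi
      by_contra hmem
      simp [hmem] at hi
  have hnotboth : ∀ J : Set I, J ∈ 𝒰 → Jᶜ ∉ 𝒰 := by
    intro J hJ hJc
    have := hU_inter hJ hJc
    rw [Set.inter_compl_self] at this
    exact hU_empty this
  -- build the ultrafilter
  let Fil : Filter I :=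
    { sets := 𝒰
      univ_sets := hU_univ
      sets_of_superset := fun h hsub => hU_mono hsub h
      inter_sets := fun h1 h2 => hU_inter h1 h2 }
  have hmemFil : ∀ J : Set I, J ∈ Fil ↔ J ∈ 𝒰 := fun _ => Iff.rfl
  let U : Ultrafilter I := Ultrafilter.ofComplNotMemIff Fil (by
    intro s
    constructor
    · intro hs
      rcases hdich s with h | h
      · exact h
      · exact absurd h hs
    · intro hs
      exact hnotboth s hs)
  have hUFil : (U : Filter I) = Fil := rfl
  have hmemU : ∀ J : Set I, J ∈ U ↔ J ∈ 𝒰 := fun _ => Iff.rfl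
  -- characterization of membership as factoring
  have hchar : ∀ J : Set I, J ∈ 𝒰 ↔
      ∃ g : (∀ j : J, B j) →* A, f = g.comp (projHom B J) := by
    intro J
    constructor
    · intro hJ
      refine ⟨f.comp (BNext B J), ?_⟩
      ext b
      simp only [MonoidHom.comp_apply]
      have hsplit : b = (BNext B J) ((projHom B J) b) *
          (fun i => if i ∈ J then 1 else b i) := by
        funext i
        by_cases h : i ∈ J <;> simp [BNext, projHom, h] <;> rfl
      have h1 : f (fun i => if i ∈ J then 1 else b i) = 1 :=
        hJ _ fun i hi => by simp [hi]
      conv_lhs => rw [hsplit]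
      rw [map_mul, h1, mul_one]
    · rintro ⟨g, hg⟩ b hb
      have : (projHom B J) b = 1 := funext fun j => hb j j.2
      rw [hg]
      simp only [MonoidHom.comp_apply, this, map_one]
  refine ⟨U, fun J => (hmemU J).trans (hchar J), ?_, ?_⟩
  · -- κ-completeness
    intro T hne hmem hcard
    by_cases hfin : T.Finite
    · exact (Filter.sInter_mem hfin).2 hmem
    · have hinf : Cardinal.aleph0 ≤ Cardinal.mk T := by
        rw [Cardinal.aleph0_le_mk_iff, Set.infinite_coe_iff]
        exact hfin
      have hchoice : ∀ i, i ∉ ⋂₀ T → ∃ s : ↥T, i ∉ (s : Set I) := by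
        intro i hi
        rw [Set.mem_sInter] at hi
        push_neg at hi
        obtain ⟨s, hs, hns⟩ := hi
        exact ⟨⟨s, hs⟩, hns⟩
      let p : I → Option ↥T := fun i =>
        if h : i ∈ ⋂₀ T then none else some (hchoice i h).choose
      have hcard' : Cardinal.mk (Option ↥T) < κ := by
        rw [Cardinal.mk_option, Cardinal.add_one_eq hinf]
        exact hcard
      obtain ⟨t₀, ht₀⟩ := fiber (Option ↥T) p hcard'
      match t₀ with
      | none =>
        refine hU_mono (fun i hi => ?_) ht₀
        simp only [Set.mem_setOf_eq, p] at hi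
        by_contra h
        simp [h] at hi
      | some s =>
        exfalso
        have hsub : {i | p i = some s} ⊆ (↑s : Set I)ᶜ := by
          intro i hi
          simp only [Set.mem_setOf_eq, p] at hi
          split at hi
          · exact absurd hi (by simp)
          · next h =>
            rw [Option.some.injEq] at hi
            rw [← hi]
            exact (hchoice i h).choose_spec
        have h1 : (↑s : Set I)ᶜ ∈ 𝒰 := hU_mono hsub ht₀
        exact hnotboth (↑s) (hmem s s.2) h1
  · -- factoring through the ultraproduct
    have hker : ∀ b ∈ filterKer (↑U : Filter I) B, f b = 1 := by
      intro b hb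
      have hb' : {i | b i = 1} ∈ 𝒰 := hb
      exact hb' b fun i hi => hi
    refine ⟨QuotientGroup.lift _ f hker, ?_⟩
    ext b
    rfl
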